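/- The repetition system satisfies condition (A2): for every c ∈ Θ̃ and every ε > 0 there exist k ∈ ℕ and f ∈ M^{c^{(k)}} with ‖f‖ < ε, where c^{(k)} is the sequence obtained from c by replacing its first k coordinates by 0. -/

import Mathlib

noncomputable section

open Set

/-- `M^c` for the repetition system `g i f = t i * ⟪f, e (σ i)⟫`. -/
def MSetH {H : Type*} [NormedAddCommGroup H] [InnerProductSpace ℝ H]
    (e : ℕ → H) (σ : ℕ → ℕ) (t : ℕ → ℝ) (c : ℕ → ℝ) : Set H :=
  {f | ∀ i, |c i| ≤ |t i * (inner ℝ f (e (σ i)) : ℝ)|}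

/-- `Θ̃`: scalar sequences with `M^c ≠ ∅`. -/
def ThetaTH {H : Type*} [NormedAddCommGroup H] [InnerProductSpace ℝ H]
    (e : ℕ → H) (σ : ℕ → ℕ) (t : ℕ → ℝ) : Set (ℕ → ℝ) :=
  {c | (MSetH e σ t c).Nonempty}

/-- `N(c) = inf{‖f‖ : f ∈ M^c}`. -/
def NNH {H : Type*} [NormedAddCommGroup H] [InnerProductSpace ℝ H]
    (e : ℕ → H) (σ : ℕ → ℕ) (t : ℕ → ℝ) (c : ℕ → ℝ) : ℝ :=
  sInf ((fun f => ‖f‖) '' MSetH e σ t c)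

/-- `c^{(k)}`: the sequence `c` with its first `k` coordinates replaced by `0`. -/
def trunc (c : ℕ → ℝ) (k : ℕ) : ℕ → ℝ :=
  fun i => if i < k then 0 else c i

theorem repetition_system_A2
    {H : Type*} [NormedAddCommGroup H] [InnerProductSpace ℝ H] [CompleteSpace H]
    (e : HilbertBasis ℕ ℝ H) (σ : ℕ → ℕ) (t : ℕ → ℝ)
    (hσmono : Monotone σ) (hσsurj : Function.Surjective σ)
    (hσtend : Filter.Tendsto σ Filter.atTop Filter.atTop)
    (ht : ∀ i, t i ≠ 0) :
    ∀ c ∈ ThetaTH e σ t, ∀ ε > (0 : ℝ),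
      ∃ k : ℕ, ∃ f ∈ MSetH e σ t (trunc c k), ‖f‖ < ε := by
  rintro c ⟨f₀, hf₀⟩ ε hε
  have hsum : HasSum (fun j => e.repr f₀ j • (e j : H)) f₀ := e.hasSum_repr f₀
  have htend : Filter.Tendsto
      (fun n => ‖f₀ - ∑ j ∈ Finset.range n, e.repr f₀ j • (e j : H)‖)
      Filter.atTop (nhds 0) := by
    have h := (tendsto_const_nhds (x := f₀) (f := Filter.atTop)).sub
      hsum.tendsto_sum_nat
    simpa using h.norm
  obtain ⟨J, hJ⟩ := (htend.eventually (gt_mem_nhds hε)).exists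
  obtain ⟨k, hk⟩ := Filter.eventually_atTop.mp (hσtend.eventually_ge_atTop J)
  set f : H := f₀ - ∑ j ∈ Finset.range J, e.repr f₀ j • (e j : H) with hf
  refine ⟨k, f, ?_, hJ⟩
  intro i
  by_cases hik : i < k
  · simpa [trunc, hik] using abs_nonneg (t i * (inner ℝ f (e (σ i)) : ℝ))
  · have hJσ : J ≤ σ i := hk i (le_of_not_gt hik)
    have hinner : (inner ℝ f (e (σ i)) : ℝ) = inner ℝ f₀ (e (σ i)) := by
      rw [hf, inner_sub_left, sum_inner]
      rw [Finset.sum_eq_zero, sub_zero]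
      intro j hj
      rw [real_inner_smul_left,
        e.orthonormal.2 (Nat.ne_of_lt ((Finset.mem_range.mp hj).trans_le hJσ)),
        mul_zero]
    simp only [trunc, if_neg hik]
    rw [hinner]
    exact hf₀ i
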